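/- Let R be a commutative local ring, n ≥ 3, and f = (f₁, f₂, ..., fₙ) a unimodular row over R[x] with f₁ monic. Then f is equivalent under Eₙ(R[x]) to the row f(0) = (f₁(0), ..., fₙ(0)), and f(0) is equivalent under Eₙ(R) to (1, 0, ..., 0). -/

import Mathlib

open Matrix Polynomial

/-- The set of elementary matrices (transvections) over a commutative ring. -/
def ElemSet (ι R : Type) [Fintype ι] [DecidableEq ι] [CommRing R] :
    Set (Matrix ι ι R) :=
  { M | ∃ i j : ι, ∃ a : R, i ≠ j ∧ M = Matrix.transvection i j a }

/-- The elementary subgroup `E_n(R)`, as the multiplicative closure of the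
elementary matrices (it is closed under inverses, hence a group). -/
def Elem (ι R : Type) [Fintype ι] [DecidableEq ι] [CommRing R] :
    Submonoid (Matrix ι ι R) :=
  Submonoid.closure (ElemSet ι R)

/-- A row is unimodular if its entries generate the unit ideal. -/
def IsUnimodular {ι R : Type} [CommRing R] (v : ι → R) : Prop :=
  Ideal.span (Set.range v) = ⊤

/-- Two rows are equivalent under the elementary group if one is obtained from
the other by right multiplication by an element of `E_n(R)`. -/
def RowEquivE {ι R : Type} [Fintype ι] [DecidableEq ι] [CommRing R]
    (v w : ι → R) : Prop :=
  ∃ E ∈ Elem ι R, Matrix.vecMul v E = w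

section Generic

variable {ι A B : Type} [Fintype ι] [DecidableEq ι] [CommRing A] [CommRing B]

lemma rowEquivE_refl (v : ι → A) : RowEquivE v v :=
  ⟨1, Submonoid.one_mem _, Matrix.vecMul_one v⟩

lemma rowEquivE_trans {u v w : ι → A} (h1 : RowEquivE u v) (h2 : RowEquivE v w) :
    RowEquivE u w := by
  obtain ⟨E, hE, hEe⟩ := h1
  obtain ⟨F, hF, hFe⟩ := h2
  exact ⟨E * F, mul_mem hE hF, by rw [← Matrix.vecMul_vecMul, hEe, hFe]⟩

lemma elem_inv {M : Matrix ι ι A} (hM : M ∈ Elem ι A) :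
    ∃ N ∈ Elem ι A, M * N = 1 ∧ N * M = 1 := by
  induction hM using Submonoid.closure_induction with
  | mem x hx =>
      obtain ⟨i, j, a, hij, rfl⟩ := hx
      refine ⟨Matrix.transvection i j (-a),
        Submonoid.subset_closure ⟨i, j, -a, hij, rfl⟩, ?_, ?_⟩
      · rw [Matrix.transvection_mul_transvection_same _ _ hij]
        simp [Matrix.transvection_zero]
      · rw [Matrix.transvection_mul_transvection_same _ _ hij]
        simp [Matrix.transvection_zero]
  | one => exact ⟨1, Submonoid.one_mem _, by simp, by simp⟩
  | mul x y hx hy ihx ihy =>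
      obtain ⟨Nx, hNx, hx1, hx2⟩ := ihx
      obtain ⟨Ny, hNy, hy1, hy2⟩ := ihy
      refine ⟨Ny * Nx, mul_mem hNy hNx, ?_, ?_⟩
      · rw [mul_assoc, ← mul_assoc y, hy1, one_mul, hx1]
      · rw [mul_assoc, ← mul_assoc Nx, hx2, one_mul, hy2]

lemma rowEquivE_symm {v w : ι → A} (h : RowEquivE v w) : RowEquivE w v := by
  obtain ⟨E, hE, rfl⟩ := h
  obtain ⟨N, hN, h1, _⟩ := elem_inv hE
  exact ⟨N, hN, by rw [Matrix.vecMul_vecMul, h1, Matrix.vecMul_one]⟩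

lemma vecMul_mem_span (v : ι → A) (M : Matrix ι ι A) (j : ι) :
    Matrix.vecMul v M j ∈ Ideal.span (Set.range v) := by
  have hv : Matrix.vecMul v M j = ∑ i, v i * M i j := rfl
  rw [hv]
  exact Ideal.sum_mem _ fun i _ => Ideal.mul_mem_right _ _ (Ideal.subset_span ⟨i, rfl⟩)

lemma rowEquivE_span {v w : ι → A} (h : RowEquivE v w) :
    Ideal.span (Set.range w) ≤ Ideal.span (Set.range v) := by
  obtain ⟨E, hE, rfl⟩ := h
  rw [Ideal.span_le]
  rintro x ⟨j, rfl⟩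
  exact vecMul_mem_span v E j

lemma rowEquivE_unimodular {v w : ι → A} (h : RowEquivE v w) (hv : IsUnimodular v) :
    IsUnimodular w := by
  have h2 := rowEquivE_span (rowEquivE_symm h)
  rw [hv] at h2
  exact top_le_iff.mp h2

lemma rowEquivE_step (v : ι → A) {i j : ι} (hij : i ≠ j) (c : A) :
    RowEquivE v (Function.update v j (v j + v i * c)) := by
  refine ⟨Matrix.transvection i j c, Submonoid.subset_closure ⟨i, j, c, hij, rfl⟩, ?_⟩
  funext k
  simp only [Matrix.transvection, Matrix.vecMul_add, Matrix.vecMul_one, Pi.add_apply]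
  by_cases hk : k = j
  · subst hk
    simp [Matrix.vecMul, dotProduct, Matrix.single, Function.update_self,
      ite_and, Finset.mul_sum, mul_ite]
  · simp [Matrix.vecMul, dotProduct, Matrix.single,
      Function.update_of_ne hk, Ne.symm hk, ite_and]

lemma rowEquivE_swap (v : ι → A) {i j : ι} (hij : i ≠ j) :
    RowEquivE v (Function.update (Function.update v i (-(v j))) j (v i)) := by
  have h1 := rowEquivE_step v hij (1 : A)
  have h2 := rowEquivE_step (Function.update v j (v j + v i * 1)) hij.symm (-1 : A)
  set w1 := Function.update v j (v j + v i * 1) with hw1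
  set w2 := Function.update w1 i (w1 i + w1 j * (-1)) with hw2
  have h3 := rowEquivE_step w2 hij (1 : A)
  have key : Function.update w2 j (w2 j + w2 i * 1)
      = Function.update (Function.update v i (-(v j))) j (v i) := by
    funext k
    by_cases hkj : k = j
    · subst hkj
      simp only [hw2, hw1, Function.update_self, Function.update_of_ne hij.symm,
        Function.update_of_ne hij]
      ring
    · by_cases hki : k = i
      · subst hki
        simp only [hw2, hw1, Function.update_of_ne hkj, Function.update_self,
          Function.update_of_ne hij]
        ring
      · simp only [hw2, hw1, Function.update_of_ne hkj, Function.update_of_ne hki]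
  rw [key] at h3
  exact rowEquivE_trans h1 (rowEquivE_trans h2 h3)

lemma rowEquivE_clear (i0 : ι) (v : ι → A) (h0 : v i0 = 1) :
    RowEquivE v (fun k => if k = i0 then 1 else 0) := by
  classical
  suffices H : ∀ s : Finset ι, ∀ v : ι → A, v i0 = 1 → (∀ i, i ≠ i0 → i ∉ s → v i = 0) →
      RowEquivE v (fun k => if k = i0 then 1 else 0) by
    exact H Finset.univ v h0 (fun i _ hi => absurd (Finset.mem_univ i) hi)
  intro s
  induction s using Finset.induction_on with
  | empty =>
      intro v h0 hz
      have hv : v = fun k => if k = i0 then 1 else 0 := by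
        funext k
        by_cases hk : k = i0
        · simp [hk, h0]
        · simp [hk, hz k hk (Finset.notMem_empty k)]
      rw [← hv]
      exact rowEquivE_refl v
  | @insert a s ha ih =>
      intro v h0 hz
      by_cases hai : a = i0
      · refine ih v h0 (fun i hi his => hz i hi ?_)
        intro hmem
        rcases Finset.mem_insert.mp hmem with h | h
        · exact hi (h.trans hai)
        · exact his h
      · have step := rowEquivE_step v (i := i0) (j := a) (Ne.symm hai) (-(v a))
        refine rowEquivE_trans step (ih _ ?_ ?_)
        · rw [Function.update_of_ne (Ne.symm hai), h0]
        · intro i hi his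
          by_cases hia : i = a
          · subst hia
            rw [Function.update_self, h0]
            ring
          · rw [Function.update_of_ne hia]
            exact hz i hi (fun hmem => by
              rcases Finset.mem_insert.mp hmem with h | h
              · exact hia h
              · exact his h)

lemma rowEquivE_of_isUnit {i0 i1 : ι} (h01 : i0 ≠ i1) (v : ι → A) {p : ι}
    (hp : IsUnit (v p)) : RowEquivE v (fun k => if k = i0 then 1 else 0) := by
  suffices H : ∀ v : ι → A, ∀ q, q ≠ i0 → IsUnit (v q) →
      RowEquivE v (fun k => if k = i0 then 1 else 0) by
    by_cases hpi : p = i0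
    · -- first create a unit at i1
      obtain ⟨u, hu⟩ := hp
      have step := rowEquivE_step v (i := p) (j := i1) (hpi ▸ h01) ((↑u⁻¹ : A) * (1 - v i1))
      refine rowEquivE_trans step (H _ i1 (Ne.symm (hpi ▸ h01)) ?_)
      rw [Function.update_self, ← hu, ← mul_assoc, Units.mul_inv, one_mul]
      simp
    · exact H v p hpi hp
  intro v q hq hvq
  obtain ⟨u, hu⟩ := hvq
  have step := rowEquivE_step v (i := q) (j := i0) hq ((↑u⁻¹ : A) * (1 - v i0))
  refine rowEquivE_trans step (rowEquivE_clear i0 _ ?_)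
  rw [Function.update_self, ← hu, ← mul_assoc, Units.mul_inv, one_mul]
  ring

lemma rowEquivE_map (φ : A →+* B) {v w : ι → A} (h : RowEquivE v w) :
    RowEquivE (fun i => φ (v i)) (fun i => φ (w i)) := by
  obtain ⟨E, hE, rfl⟩ := h
  refine ⟨φ.mapMatrix E, ?_, ?_⟩
  · induction hE using Submonoid.closure_induction with
    | mem x hx =>
        obtain ⟨i, j, a, hij, rfl⟩ := hx
        refine Submonoid.subset_closure ⟨i, j, φ a, hij, ?_⟩
        ext k l
        simp [Matrix.transvection, Matrix.single, RingHom.mapMatrix_apply,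
          Matrix.map_apply, Matrix.one_apply, apply_ite φ]
    | one => simpa using Submonoid.one_mem (Elem ι B)
    | mul x y hx hy ihx ihy => rw [_root_.map_mul]; exact mul_mem ihx ihy
  · funext k
    simp [Matrix.vecMul, dotProduct, RingHom.mapMatrix_apply, Matrix.map_apply,
      _root_.map_sum, _root_.map_mul]

end Generic

section LocalRing

open IsLocalRing

variable {R : Type} [CommRing R] [IsLocalRing R]

lemma exists_isUnit_of_unimodular {ι : Type} [Fintype ι] {v : ι → R}
    (h : IsUnimodular v) : ∃ i, IsUnit (v i) := by
  by_contra hc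
  push_neg at hc
  have hle : Ideal.span (Set.range v) ≤ maximalIdeal R := by
    rw [Ideal.span_le]
    rintro x ⟨i, rfl⟩
    exact (mem_maximalIdeal _).mpr (hc i)
  rw [h] at hle
  exact (maximalIdeal.isMaximal R).ne_top (top_le_iff.mp hle)

lemma isUnit_add_of_mem {a b : R} (ha : a ∈ maximalIdeal R) (hb : IsUnit b) :
    IsUnit (a + b) := by
  by_contra h
  have h1 : a + b ∈ maximalIdeal R := (mem_maximalIdeal _).mpr h
  have h2 : b ∈ maximalIdeal R := by
    have := Ideal.sub_mem _ h1 ha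
    simpa using this
  exact ((mem_maximalIdeal _).mp h2) hb

lemma reduceAll [Nontrivial R] {n : ℕ} {i0 : Fin n}
    (f : Fin n → R[X]) {g : R[X]} (hg : g.Monic) (hg1 : g ≠ 1) (c : R[X])
    (hgc : g = c * f i0) :
    ∃ f' : Fin n → R[X], RowEquivE f f' ∧ f' i0 = f i0 ∧
      ∀ i, i ≠ i0 → (f' i).natDegree < g.natDegree := by
  classical
  suffices H : ∀ s : Finset (Fin n), ∃ f' : Fin n → R[X], RowEquivE f f' ∧ f' i0 = f i0 ∧
      ∀ i ∈ s, i ≠ i0 → (f' i).natDegree < g.natDegree by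
    obtain ⟨f', h1, h2, h3⟩ := H Finset.univ
    exact ⟨f', h1, h2, fun i hi => h3 i (Finset.mem_univ i) hi⟩
  intro s
  induction s using Finset.induction_on with
  | empty => exact ⟨f, rowEquivE_refl f, rfl, by simp⟩
  | @insert a s ha ih =>
      obtain ⟨f', h1, h2, h3⟩ := ih
      by_cases hai : a = i0
      · refine ⟨f', h1, h2, fun i hi hii => ?_⟩
        rcases Finset.mem_insert.mp hi with h | h
        · exact absurd (h.trans hai) hii
        · exact h3 i h hii
      · have step := rowEquivE_step f' (i := i0) (j := a) (Ne.symm hai) (-(f' a /ₘ g * c))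
        refine ⟨_, rowEquivE_trans h1 step, ?_, ?_⟩
        · rw [Function.update_of_ne (Ne.symm hai), h2]
        · intro i hi hii
          rcases Finset.mem_insert.mp hi with h | h
          · subst h
            have key : Function.update f' i (f' i + f' i0 * -(f' i /ₘ g * c)) i
                = f' i %ₘ g := by
              rw [Function.update_self, modByMonic_eq_sub_mul_div _ g, hgc, h2]
              ring
            rw [key]
            exact natDegree_modByMonic_lt _ hg hg1
          · rw [Function.update_of_ne (fun he => ha (by rw [← he]; exact h))]
            exact h3 i h hii

lemma exists_unit_coeff {n : ℕ} {i0 : Fin n}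
    (f : Fin n → R[X]) (hum : IsUnimodular f) (hdeg : 0 < (f i0).natDegree)
    (hlead : IsUnit ((f i0).leadingCoeff)) :
    ∃ j, j ≠ i0 ∧ ∃ t, IsUnit ((f j).coeff t) := by
  by_contra hcon
  push_neg at hcon
  have h1 : (1 : R[X]) ∈ Ideal.span (Set.range f) := by
    rw [hum]; trivial
  obtain ⟨c, hc⟩ := Ideal.mem_span_range_iff_exists_fun.mp h1
  have hφ0 : ∀ j, j ≠ i0 → (f j).map (residue R) = 0 := by
    intro j hj
    ext t
    rw [coeff_map, coeff_zero]
    exact Ideal.Quotient.eq_zero_iff_mem.mpr ((mem_maximalIdeal _).mpr (hcon j hj t))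
  have hmap := congrArg (Polynomial.mapRingHom (residue R)) hc
  rw [_root_.map_sum, _root_.map_one] at hmap
  rw [Finset.sum_eq_single i0 (fun b _ hb => by
    simp only [coe_mapRingHom, Polynomial.map_mul, hφ0 b hb, mul_zero])
    (fun hb => absurd (Finset.mem_univ i0) hb)] at hmap
  simp only [coe_mapRingHom, Polynomial.map_mul] at hmap
  have hunit : IsUnit ((f i0).map (residue R)) :=
    IsUnit.of_mul_eq_one _ (by rw [mul_comm]; exact hmap)
  have hz : natDegree ((f i0).map (residue R)) = 0 := natDegree_eq_zero_of_isUnit hunit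
  have hne : ((f i0).map (residue R)).coeff ((f i0).natDegree) ≠ 0 := by
    rw [coeff_map]
    intro h0
    have hmem := Ideal.Quotient.eq_zero_iff_mem.mp h0
    exact ((mem_maximalIdeal _).mp hmem) hlead
  have hge := le_natDegree_of_ne_zero hne
  omega

lemma horrocks {n : ℕ} (hn : 3 ≤ n) :
    ∀ d : ℕ, ∀ f : Fin n → R[X], IsUnimodular f →
      IsUnit ((f ⟨0, by have := d; omega⟩).coeff d) → (f ⟨0, by have := d; omega⟩).natDegree ≤ d →
      RowEquivE f (fun k => if k = (⟨0, by have := d; omega⟩ : Fin n) then 1 else 0) := by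
  have h0n : 0 < n := by omega
  intro d
  induction d with
  | zero =>
      intro f hum hu hd
      have hC : f ⟨0, h0n⟩ = C ((f ⟨0, h0n⟩).coeff 0) := eq_C_of_natDegree_le_zero hd
      exact rowEquivE_of_isUnit (i0 := ⟨0, h0n⟩) (i1 := ⟨1, by omega⟩)
        (by simp [Fin.ext_iff]) f (p := ⟨0, h0n⟩) (by rw [hC]; exact isUnit_C.mpr hu)
  | succ d ih =>
      intro f hum hu hd
      set i0 : Fin n := ⟨0, h0n⟩ with hi0
      have hne : (f i0).coeff (d + 1) ≠ 0 := hu.ne_zero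
      have hdeg : (f i0).natDegree = d + 1 := le_antisymm hd (le_natDegree_of_ne_zero hne)
      have hlead : IsUnit (f i0).leadingCoeff := by
        rwa [Polynomial.leadingCoeff, hdeg]
      set c0 : R := ((hlead.unit⁻¹ : Rˣ) : R) with hc0
      have hgm : Monic (hlead.unit⁻¹ • f i0) := monic_of_isUnit_leadingCoeff_inv_smul hlead
      set g : R[X] := hlead.unit⁻¹ • f i0 with hg
      have hgc : g = C c0 * f i0 := by
        rw [hg, Units.smul_def, smul_eq_C_mul]
      have hgdeg : g.natDegree = d + 1 := by
        rw [hg, natDegree_smul_of_smul_regular _ (isSMulRegular_of_group _), hdeg]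
      have hg1 : g ≠ 1 := by
        intro h
        rw [h, natDegree_one] at hgdeg
        omega
      obtain ⟨f', hff', hf'0, hf'deg⟩ := reduceAll f hgm hg1 _ hgc
      have hum' : IsUnimodular f' := rowEquivE_unimodular hff' hum
      obtain ⟨j1, hj1, t1, hj1t⟩ := exists_unit_coeff f' hum'
        (by rw [hf'0, hdeg]; omega) (by rwa [hf'0])
      classical
      set P : ℕ → Prop := fun t => ∃ j, j ≠ i0 ∧ IsUnit ((f' j).coeff t) with hP
      have hbound : ∀ t, P t → t ≤ d := by
        rintro t ⟨j', hj', hunit⟩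
        by_contra hlt
        push_neg at hlt
        have hz : (f' j').coeff t = 0 := by
          apply coeff_eq_zero_of_natDegree_lt
          have := hf'deg j' hj'
          omega
        exact hunit.ne_zero hz
      have hPt1 : P t1 := ⟨j1, hj1, hj1t⟩
      set e := Nat.findGreatest P d with he
      have hPe : P e := Nat.findGreatest_spec (hbound t1 hPt1) hPt1
      have hgt : ∀ t', e < t' → ∀ j', j' ≠ i0 → (f' j').coeff t' ∈ maximalIdeal R := by
        intro t' ht' j' hj'
        refine (mem_maximalIdeal _).mpr (fun hu' => ?_)
        have hPt' : P t' := ⟨j', hj', hu'⟩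
        rcases le_or_gt t' d with h | h
        · exact Nat.findGreatest_is_greatest ht' h hPt'
        · exact absurd (hbound t' hPt') (by omega)
      obtain ⟨jj, hjj, hjju⟩ := hPe
      have hed : e ≤ d := Nat.findGreatest_le d
      -- In both cases below we produce a row equivalent to `f'` whose entry at some
      -- `p ≠ i0` has unit `d`-th coefficient and natDegree ≤ d, then swap it to i0.
      have finish : ∀ w : Fin n → R[X], RowEquivE f w →
          ∀ p : Fin n, p ≠ i0 → IsUnit ((w p).coeff d) → (w p).natDegree ≤ d →
          RowEquivE f (fun k => if k = i0 then 1 else 0) := by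
        intro w hw p hp hwu hwd
        have hswap := rowEquivE_swap w (i := i0) (j := p) (Ne.symm hp)
        set w2 := Function.update (Function.update w i0 (-(w p))) p (w i0) with hw2
        have hw20 : w2 i0 = -(w p) := by
          rw [hw2, Function.update_of_ne (Ne.symm hp), Function.update_self]
        have hchain : RowEquivE f w2 := rowEquivE_trans hw hswap
        have hum2 : IsUnimodular w2 := rowEquivE_unimodular hchain hum
        refine rowEquivE_trans hchain (ih w2 hum2 ?_ ?_)
        · show IsUnit ((w2 i0).coeff d)
          rw [hw20, coeff_neg]
          exact hwu.neg
        · show (w2 i0).natDegree ≤ d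
          rw [hw20, natDegree_neg]
          exact hwd
      rcases eq_or_lt_of_le hed with heq | hlt
      · -- e = d : entry jj already works
        refine finish f' hff' jj hjj ?_ ?_
        · rw [← heq]; exact hjju
        · have := hf'deg jj hjj; omega
      · -- e < d : build a new entry at position p
        have hex : ∃ p : Fin n, p ≠ jj ∧ p ≠ i0 := by
          by_cases h : jj = ⟨1, by omega⟩
          · exact ⟨⟨2, by omega⟩, by rw [h]; simp [Fin.ext_iff],
              by simp [hi0, Fin.ext_iff]⟩
          · exact ⟨⟨1, by omega⟩, fun hh => h hh.symm, by simp [hi0, Fin.ext_iff]⟩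
        obtain ⟨p, hpj, hpi0⟩ := hex
        -- step 1 : add X^(d-e) * f' jj to position p
        have step1 := rowEquivE_step f' (i := jj) (j := p) (Ne.symm hpj) (X ^ (d - e))
        set h1 : R[X] := f' p + f' jj * X ^ (d - e) with hh1
        set v1 : Fin n → R[X] := Function.update f' p h1 with hv1
        have hv1p : v1 p = h1 := by rw [hv1]; exact Function.update_self p h1 f'
        have hv10 : v1 i0 = f i0 := by
          rw [hv1, Function.update_of_ne (Ne.symm hpi0), hf'0]
        have hh1d : IsUnit (h1.coeff d) := by
          rw [hh1, coeff_add, coeff_mul_X_pow', if_pos (by omega : d - e ≤ d)]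
          have hde : d - (d - e) = e := by omega
          rw [hde]
          exact isUnit_add_of_mem (hgt d hlt p hpi0) hjju
        have hh1m : ∀ t', d < t' → h1.coeff t' ∈ maximalIdeal R := by
          intro t' ht'
          rw [hh1, coeff_add]
          refine Ideal.add_mem _ ?_ ?_
          · have hz : (f' p).coeff t' = 0 := by
              apply coeff_eq_zero_of_natDegree_lt
              have := hf'deg p hpi0
              omega
            rw [hz]; exact Submodule.zero_mem _
          · rw [coeff_mul_X_pow', if_pos (by omega : d - e ≤ t')]
            exact hgt (t' - (d - e)) (by omega) jj hjj
        -- step 2 : reduce position p mod g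
        have step2 := rowEquivE_step v1 (i := i0) (j := p) (Ne.symm hpi0)
          (-(h1 /ₘ g * C c0))
        have hv2p : Function.update v1 p (v1 p + v1 i0 * -(h1 /ₘ g * C c0)) p
            = h1 %ₘ g := by
          rw [Function.update_self, hv1p, hv10, modByMonic_eq_sub_mul_div _ g, hgc]
          ring
        set r : R[X] := h1 %ₘ g with hr
        -- properties of r
        have hrdeg : r.natDegree ≤ d := by
          have h5 : r.natDegree < g.natDegree := natDegree_modByMonic_lt h1 hgm hg1
          omega
        have hrmap : r.map (residue R) = h1.map (residue R) := by
          show (h1 %ₘ g).map (residue R) = h1.map (residue R)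
          rw [map_modByMonic _ hgm]
          refine (modByMonic_eq_self_iff (hgm.map _)).mpr ?_
          have hgz : (g.map (residue R)).degree = ((d + 1 : ℕ) : WithBot ℕ) := by
            rw [degree_eq_natDegree (hgm.map (residue R)).ne_zero, hgm.natDegree_map, hgdeg]
          rw [hgz]
          refine (degree_lt_iff_coeff_zero _ _).mpr (fun t' ht' => ?_)
          rw [coeff_map]
          exact Ideal.Quotient.eq_zero_iff_mem.mpr (hh1m t' (by omega))
        have hrd : IsUnit (r.coeff d) := by
          by_contra hcu
          have hz : residue R (r.coeff d) = 0 :=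
            Ideal.Quotient.eq_zero_iff_mem.mpr ((mem_maximalIdeal _).mpr hcu)
          have h3 : residue R (r.coeff d) = residue R (h1.coeff d) := by
            rw [← coeff_map, ← coeff_map, hrmap]
          rw [h3] at hz
          have hm : h1.coeff d ∈ maximalIdeal R := Ideal.Quotient.eq_zero_iff_mem.mp hz
          exact ((mem_maximalIdeal _).mp hm) hh1d
        -- assemble
        set v2 : Fin n → R[X] := Function.update v1 p (v1 p + v1 i0 * -(h1 /ₘ g * C c0))
          with hv2def
        have hchain2 : RowEquivE f v2 :=
          rowEquivE_trans hff' (rowEquivE_trans step1 step2)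
        refine finish v2 hchain2 p hpi0 ?_ ?_
        · rw [hv2p]; exact hrd
        · rw [hv2p]; exact hrdeg

end LocalRing

theorem stmt_11 {R : Type} [CommRing R] [IsLocalRing R] (n : ℕ) (hn : 3 ≤ n)
    (f : Fin n → R[X]) (hum : IsUnimodular f)
    (hmonic : (f ⟨0, by omega⟩).Monic) :
    RowEquivE f (fun i => C ((f i).eval 0)) ∧
      RowEquivE (fun i => (f i).eval 0)
        (fun i : Fin n => if i.val = 0 then (1 : R) else 0) := by
  have h0n : 0 < n := by omega
  set i0 : Fin n := ⟨0, h0n⟩ with hi0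
  -- part A : f ~ e1 over R[X]
  have hA : RowEquivE f (fun k => if k = i0 then 1 else 0) := by
    refine horrocks hn ((f i0).natDegree) f hum ?_ le_rfl
    have hc := hmonic.coeff_natDegree
    rw [show (f ⟨0, by omega⟩) = f i0 from rfl] at hc
    rw [hc]
    exact isUnit_one
  -- the evaluated row is unimodular over R
  have humev : IsUnimodular (fun i => (f i).eval 0) := by
    have h1 : (1 : R[X]) ∈ Ideal.span (Set.range f) := by rw [hum]; trivial
    obtain ⟨c, hc⟩ := Ideal.mem_span_range_iff_exists_fun.mp h1
    have h2 := congrArg (Polynomial.evalRingHom (0 : R)) hc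
    rw [_root_.map_sum, _root_.map_one] at h2
    simp only [_root_.map_mul, coe_evalRingHom] at h2
    refine (Ideal.eq_top_iff_one _).mpr ?_
    exact Ideal.mem_span_range_iff_exists_fun.mpr ⟨fun i => (c i).eval 0, h2⟩
  -- part B : f(0) ~ e1 over R
  obtain ⟨pu, hpu⟩ := exists_isUnit_of_unimodular humev
  have hB : RowEquivE (fun i => (f i).eval 0) (fun k => if k = i0 then 1 else 0) :=
    rowEquivE_of_isUnit (i0 := i0) (i1 := ⟨1, by omega⟩) (by simp [hi0, Fin.ext_iff])
      _ hpu
  have hidf : (fun k : Fin n => if k = i0 then (1 : R) else 0)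
      = fun i : Fin n => if i.val = 0 then (1 : R) else 0 := by
    funext k
    simp [hi0, Fin.ext_iff]
  constructor
  · -- map hB through C
    have hBC := rowEquivE_map (Polynomial.C (R := R)) hB
    have hCe : (fun i : Fin n => Polynomial.C ((fun k : Fin n => if k = i0 then (1 : R) else 0) i))
        = fun k : Fin n => if k = i0 then (1 : R[X]) else 0 := by
      funext k
      by_cases hk : k = i0 <;> simp [hk]
    rw [hCe] at hBC
    exact rowEquivE_trans hA (rowEquivE_symm hBC)
  · rw [← hidf]
    exact hB
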